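/- For the qubit channel Γ_μ(ρ(x,y,z)) = ρ(μx, μy, 0.5z) and the state |ψ⟩ = √p|00⟩ + √(1−p)|11⟩, the operator (Γ_μ ⊗ Γ_μ)(|ψ⟩⟨ψ|) has eigenvalues 3/16, 3/16, and (5 ± 4√(1 + (16μ⁴ − 4)p(1−p)))/16. -/

import Mathlib

open Matrix Kronecker BigOperators
open scoped ComplexOrder

noncomputable def matLog2 {n : Type*} [Fintype n] [DecidableEq n] (A : Matrix n n ℂ) :
    Matrix n n ℂ :=
  if hA : A.IsHermitian then
    (hA.eigenvectorUnitary : Matrix n n ℂ) *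
      Matrix.diagonal (fun i => (Real.logb 2 (hA.eigenvalues i) : ℂ)) *
      (star (hA.eigenvectorUnitary : Matrix n n ℂ))
  else 0

/-- von Neumann entropy (base 2): `S(A) = -Tr (A log₂ A)`. -/
noncomputable def vnEntropy {n : Type*} [Fintype n] [DecidableEq n] (A : Matrix n n ℂ) : ℝ :=
  -((A * matLog2 A).trace).re

/-- Quantum relative entropy `H(ω,σ) = Tr ω (log₂ ω - log₂ σ)`. -/
noncomputable def relEnt {n : Type*} [Fintype n] [DecidableEq n] (ω σ : Matrix n n ℂ) : ℝ :=
  ((ω * (matLog2 ω - matLog2 σ)).trace).re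

def IsDensityMatrix {n : Type*} [Fintype n] [DecidableEq n] (A : Matrix n n ℂ) : Prop :=
  A.PosSemidef ∧ A.trace = 1

/-- Holevo capacity: sup of `S(Γ(ρ̄)) - ∑ pᵢ S(Γ(ρᵢ))` over finite ensembles. -/
noncomputable def holevoCap {n : Type*} [Fintype n] [DecidableEq n]
    (Γ : Matrix n n ℂ → Matrix n n ℂ) : ℝ :=
  sSup {c : ℝ | ∃ (m : ℕ) (p : Fin m → ℝ) (ρ : Fin m → Matrix n n ℂ),
    (∀ i, 0 ≤ p i) ∧ (∑ i, p i = 1) ∧ (∀ i, IsDensityMatrix (ρ i)) ∧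
    c = vnEntropy (Γ (∑ i, p i • ρ i)) - ∑ i, p i * vnEntropy (Γ (ρ i))}

noncomputable def pauliX : Matrix (Fin 2) (Fin 2) ℂ := !![0, 1; 1, 0]
noncomputable def pauliY : Matrix (Fin 2) (Fin 2) ℂ := !![0, -Complex.I; Complex.I, 0]
noncomputable def pauliZ : Matrix (Fin 2) (Fin 2) ℂ := !![1, 0; 0, -1]

/-- The Bloch representation `ρ(x,y,z) = ½(I + xσₓ + yσ_y + zσ_z)`. -/
noncomputable def blochMat (x y z : ℝ) : Matrix (Fin 2) (Fin 2) ℂ :=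
  (1/2 : ℂ) • ((1 : Matrix (Fin 2) (Fin 2) ℂ) + (x : ℂ) • pauliX + (y : ℂ) • pauliY
    + (z : ℂ) • pauliZ)

/-- The (linear extension of the) qubit map acting on Bloch coordinates by
`(x,y,z) ↦ (λ₁x + t₁, λ₂y + t₂, λ₃z + t₃)`. -/
noncomputable def qubitChan (l₁ l₂ l₃ t₁ t₂ t₃ : ℝ) (M : Matrix (Fin 2) (Fin 2) ℂ) :
    Matrix (Fin 2) (Fin 2) ℂ :=
  (1/2 : ℂ) • (M.trace • (1 : Matrix (Fin 2) (Fin 2) ℂ)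
    + ((l₁ : ℂ) * (M * pauliX).trace + (t₁ : ℂ) * M.trace) • pauliX
    + ((l₂ : ℂ) * (M * pauliY).trace + (t₂ : ℂ) * M.trace) • pauliY
    + ((l₃ : ℂ) * (M * pauliZ).trace + (t₃ : ℂ) * M.trace) • pauliZ)

/-- The tensor product `Γ₁ ⊗ Γ₂` of two maps on matrices, acting on the Kronecker-product
space, determined by `(Γ₁ ⊗ Γ₂)(A ⊗ₖ B) = Γ₁(A) ⊗ₖ Γ₂(B)` for linear `Γ₁, Γ₂`. -/
noncomputable def tensorMap {m n : Type*} [Fintype m] [DecidableEq m] [Fintype n] [DecidableEq n]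
    (Γ₁ : Matrix m m ℂ → Matrix m m ℂ) (Γ₂ : Matrix n n ℂ → Matrix n n ℂ)
    (M : Matrix (m × n) (m × n) ℂ) : Matrix (m × n) (m × n) ℂ :=
  ∑ j : m, ∑ l : m,
    (Γ₁ (Matrix.single j l 1)) ⊗ₖ (Γ₂ (Matrix.of fun a b => M (j, a) (l, b)))

/-- Partial trace over the first tensor factor. -/
noncomputable def ptrace1 {m n : Type*} [Fintype m] (X : Matrix (m × n) (m × n) ℂ) :
    Matrix n n ℂ :=
  Matrix.of fun i k => ∑ a : m, X (a, i) (a, k)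

/-- Partial trace over the second tensor factor. -/
noncomputable def ptrace2 {m n : Type*} [Fintype n] (X : Matrix (m × n) (m × n) ℂ) :
    Matrix m m ℂ :=
  Matrix.of fun i k => ∑ a : n, X (i, a) (k, a)

/-- The vector `|ψ_p⟩ = √p |00⟩ + √(1-p) |11⟩` in ℂ²⊗ℂ². -/
noncomputable def psiP (p : ℝ) : Fin 2 × Fin 2 → ℂ := fun ij =>
  if ij.1 = 0 ∧ ij.2 = 0 then (Real.sqrt p : ℂ)
  else if ij.1 = 1 ∧ ij.2 = 1 then (Real.sqrt (1 - p) : ℂ) else 0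


section AuxEigen

open Polynomial

variable {n : Type*} [Fintype n] [DecidableEq n]

private lemma my_charpoly_conj (U V A : Matrix n n ℂ) (hUV : U * V = 1) :
    (U * A * V).charpoly = A.charpoly := by
  have hmm : ∀ B C : Matrix n n ℂ,
      (B * C).map Polynomial.C = B.map Polynomial.C * C.map Polynomial.C := by
    intro B C
    exact (RingHom.mapMatrix (Polynomial.C (R := ℂ))).map_mul B C
  have h1 : (U.map Polynomial.C) * (V.map Polynomial.C) = 1 := by
    rw [← hmm, hUV]; ext i j; simp [Matrix.one_apply, apply_ite]
  have hcomm : U.map Polynomial.C * (Matrix.diagonal fun _ : n => (X : ℂ[X])) =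
      (Matrix.diagonal fun _ : n => (X : ℂ[X])) * U.map Polynomial.C := by
    ext i j; rw [Matrix.mul_diagonal, Matrix.diagonal_mul, mul_comm]
  have key : Matrix.charmatrix (U * A * V) =
      (U.map Polynomial.C) * Matrix.charmatrix A * (V.map Polynomial.C) := by
    unfold Matrix.charmatrix
    rw [mul_sub, sub_mul]
    congr 1
    · rw [Matrix.scalar_apply, hcomm, mul_assoc, h1, mul_one]
    · simp only [RingHom.mapMatrix_apply]
      rw [hmm, hmm]
  rw [Matrix.charpoly, key, Matrix.det_mul, Matrix.det_mul, Matrix.charpoly,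
    mul_comm (Matrix.det _), mul_assoc, ← Matrix.det_mul, h1, Matrix.det_one, mul_one]

private lemma my_charpoly_diagonal (d : n → ℂ) :
    (Matrix.diagonal d).charpoly = ∏ i, (X - Polynomial.C (d i)) := by
  have : Matrix.charmatrix (Matrix.diagonal d) =
      Matrix.diagonal (fun i => X - Polynomial.C (d i)) := by
    ext i j
    by_cases h : i = j
    · subst h; simp [Matrix.charmatrix_apply, Matrix.diagonal_apply_eq]
    · simp [Matrix.charmatrix_apply_ne _ _ _ h, Matrix.diagonal_apply_ne _ h]
  rw [Matrix.charpoly, this, Matrix.det_diagonal]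

private lemma herm_charpoly (A : Matrix n n ℂ) (hA : A.IsHermitian) :
    A.charpoly = ∏ i, (X - Polynomial.C ((hA.eigenvalues i : ℝ) : ℂ)) := by
  conv_lhs => rw [hA.spectral_theorem, Unitary.conjStarAlgAut_apply]
  rw [my_charpoly_conj _ _ _ (Matrix.mem_unitaryGroup_iff.mp (hA.eigenvectorUnitary).2),
    my_charpoly_diagonal]
  rfl

private lemma gamma_eq (μ : ℝ) (N : Matrix (Fin 2) (Fin 2) ℂ) :
    qubitChan μ μ (1/2) 0 0 0 N =
      !![(3 * N 0 0 + N 1 1)/4, (μ:ℂ) * N 0 1; (μ:ℂ) * N 1 0, (N 0 0 + 3 * N 1 1)/4] := by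
  ext i k
  fin_cases i <;> fin_cases k <;>
    simp [qubitChan, pauliX, pauliY, pauliZ, Matrix.trace, Matrix.diag, Fin.sum_univ_two,
      Matrix.mul_apply, Matrix.one_apply] <;>
    ring_nf <;>
    simp [Complex.I_sq] <;> ring

section entries
variable (μ p : ℝ)

private lemma g00 : qubitChan μ μ (1/2) 0 0 0 (Matrix.single 0 0 1) = !![3/4,0;0,1/4] := by
  rw [gamma_eq]; norm_num [Matrix.single]
private lemma g01 : qubitChan μ μ (1/2) 0 0 0 (Matrix.single 0 1 1) = !![0,(μ:ℂ);0,0] := by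
  rw [gamma_eq]; norm_num [Matrix.single]
private lemma g10 : qubitChan μ μ (1/2) 0 0 0 (Matrix.single 1 0 1) = !![0,0;(μ:ℂ),0] := by
  rw [gamma_eq]; norm_num [Matrix.single]
private lemma g11 : qubitChan μ μ (1/2) 0 0 0 (Matrix.single 1 1 1) = !![1/4,0;0,3/4] := by
  rw [gamma_eq]; norm_num [Matrix.single]

local notation "uu" => ((Real.sqrt p : ℝ) : ℂ)
local notation "vv" => ((Real.sqrt (1-p) : ℝ) : ℂ)

private lemma s00 : (Matrix.of fun a b => (Matrix.vecMulVec (psiP p) (star (psiP p))) (0, a) (0, b)) =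
    !![uu*uu,0;0,0] := by
  ext a b; fin_cases a <;> fin_cases b <;> simp [Matrix.vecMulVec_apply, psiP]
private lemma s01 : (Matrix.of fun a b => (Matrix.vecMulVec (psiP p) (star (psiP p))) (0, a) (1, b)) =
    !![0,uu*vv;0,0] := by
  ext a b; fin_cases a <;> fin_cases b <;> simp [Matrix.vecMulVec_apply, psiP]
private lemma s10 : (Matrix.of fun a b => (Matrix.vecMulVec (psiP p) (star (psiP p))) (1, a) (0, b)) =
    !![0,0;vv*uu,0] := by
  ext a b; fin_cases a <;> fin_cases b <;> simp [Matrix.vecMulVec_apply, psiP]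
private lemma s11 : (Matrix.of fun a b => (Matrix.vecMulVec (psiP p) (star (psiP p))) (1, a) (1, b)) =
    !![0,0;0,vv*vv] := by
  ext a b; fin_cases a <;> fin_cases b <;> simp [Matrix.vecMulVec_apply, psiP]

private lemma gs00 : qubitChan μ μ (1/2) 0 0 0
    (Matrix.of fun a b => (Matrix.vecMulVec (psiP p) (star (psiP p))) (0, a) (0, b)) =
    !![3/4*(uu*uu),0;0,1/4*(uu*uu)] := by
  rw [s00, gamma_eq]; norm_num; constructor <;> ring
private lemma gs01 : qubitChan μ μ (1/2) 0 0 0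
    (Matrix.of fun a b => (Matrix.vecMulVec (psiP p) (star (psiP p))) (0, a) (1, b)) =
    !![0,(μ:ℂ)*(uu*vv);0,0] := by
  rw [s01, gamma_eq]; norm_num
private lemma gs10 : qubitChan μ μ (1/2) 0 0 0
    (Matrix.of fun a b => (Matrix.vecMulVec (psiP p) (star (psiP p))) (1, a) (0, b)) =
    !![0,0;(μ:ℂ)*(vv*uu),0] := by
  rw [s10, gamma_eq]; norm_num
private lemma gs11 : qubitChan μ μ (1/2) 0 0 0
    (Matrix.of fun a b => (Matrix.vecMulVec (psiP p) (star (psiP p))) (1, a) (1, b)) =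
    !![1/4*(vv*vv),0;0,3/4*(vv*vv)] := by
  rw [s11, gamma_eq]; norm_num; constructor <;> ring

set_option maxHeartbeats 1000000 in
private lemma matrix_eq :
    Matrix.reindex finProdFinEquiv finProdFinEquiv
      (tensorMap (qubitChan μ μ (1 / 2) 0 0 0) (qubitChan μ μ (1 / 2) 0 0 0)
        (Matrix.vecMulVec (psiP p) (star (psiP p)))) =
    !![(9*(uu*uu)+vv*vv)/16, 0, 0, (μ:ℂ)^2*(uu*vv);
       0, (3*(uu*uu)+3*(vv*vv))/16, 0, 0;
       0, 0, (3*(uu*uu)+3*(vv*vv))/16, 0;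
       (μ:ℂ)^2*(uu*vv), 0, 0, (uu*uu+9*(vv*vv))/16] := by
  ext i j
  fin_cases i <;> fin_cases j <;>
  · simp only [Matrix.reindex_apply, Matrix.submatrix_apply]
    norm_num [tensorMap, Matrix.sum_apply, Fin.sum_univ_two, Matrix.kroneckerMap_apply,
      Fin.divNat, Fin.modNat,
      g00 μ, g01 μ, g10 μ, g11 μ, gs00 μ p, gs01 μ p, gs10 μ p, gs11 μ p]
    try ring

end entries

set_option maxHeartbeats 1000000 in
private lemma charpoly_M4 (μ p s r : ℂ) (hs : s^2 = p*(1-p))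
    (hr : r^2 = 1+(16*μ^4-4)*p*(1-p)) :
    (!![(1+8*p)/16, 0, 0, μ^2*s;
        0, 3/16, 0, 0;
        0, 0, 3/16, 0;
        μ^2*s, 0, 0, (9-8*p)/16] : Matrix (Fin 4) (Fin 4) ℂ).charpoly
    = (X - C (3/16)) * ((X - C (3/16)) *
        ((X - C ((5+4*r)/16)) * ((X - C ((5-4*r)/16)) * 1))) := by
  apply Polynomial.funext
  intro x
  rw [Matrix.charpoly, ← Polynomial.coe_evalRingHom, RingHom.map_det]
  simp only [RingHom.mapMatrix_apply]
  have hcm : (Matrix.charmatrix (!![(1+8*p)/16, 0, 0, μ^2*s;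
        0, 3/16, 0, 0;
        0, 0, 3/16, 0;
        μ^2*s, 0, 0, (9-8*p)/16] : Matrix (Fin 4) (Fin 4) ℂ)).map (eval x ∘ id)
      = !![x - (1+8*p)/16, 0, 0, -(μ^2*s);
          0, x - 3/16, 0, 0;
          0, 0, x - 3/16, 0;
          -(μ^2*s), 0, 0, x - (9-8*p)/16] := by
    ext i j
    fin_cases i <;> fin_cases j <;>
      simp [Matrix.charmatrix_apply, Matrix.diagonal_apply, Matrix.one_apply,
        Matrix.vecHead, Matrix.vecTail]
  rw [show ((eval x : ℂ[X] → ℂ) ∘ id) = ⇑(evalRingHom x) from rfl] at hcm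
  rw [hcm]
  simp only [Polynomial.coe_evalRingHom, eval_mul, eval_sub, eval_X, eval_C, eval_one]
  simp [Matrix.det_succ_row_zero, Fin.sum_univ_succ, Matrix.vecHead, Matrix.vecTail,
    Fin.succAbove, Fin.castSucc, Fin.castAdd, Fin.castLE, Fin.succ]
  linear_combination (x - 3/16)^2 * (-(μ^4)) * hs + (x-3/16)^2 * (1/16 : ℂ) * hr

end AuxEigen

open Polynomial

/-- For `Γ_μ(ρ(x,y,z)) = ρ(μx, μy, z/2)` and `|ψ⟩ = √p|00⟩ + √(1-p)|11⟩`, the operator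
`(Γ_μ ⊗ Γ_μ)(|ψ⟩⟨ψ|)` has eigenvalues `3/16, 3/16, (5 ± 4√(1+(16μ⁴-4)p(1-p)))/16`. -/
theorem eigenvalues_of_product_channel_output (μ p : ℝ) (hμ0 : 0 ≤ μ) (hμ : μ ≤ 3 / 4)
    (hp0 : 0 ≤ p) (hp1 : p ≤ 1)
    (hM : (tensorMap (qubitChan μ μ (1 / 2) 0 0 0) (qubitChan μ μ (1 / 2) 0 0 0)
      (Matrix.vecMulVec (psiP p) (star (psiP p)))).IsHermitian) :
    Multiset.map hM.eigenvalues Finset.univ.val =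
      ({3 / 16, 3 / 16,
        (5 + 4 * Real.sqrt (1 + (16 * μ ^ 4 - 4) * p * (1 - p))) / 16,
        (5 - 4 * Real.sqrt (1 + (16 * μ ^ 4 - 4) * p * (1 - p))) / 16} : Multiset ℝ) := by
  classical
  set A := tensorMap (qubitChan μ μ (1 / 2) 0 0 0) (qubitChan μ μ (1 / 2) 0 0 0)
      (Matrix.vecMulVec (psiP p) (star (psiP p))) with hAdef
  have hp1' : (0:ℝ) ≤ 1 - p := by linarith
  have hD0 : (0:ℝ) ≤ 1 + (16 * μ ^ 4 - 4) * p * (1 - p) := by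
    nlinarith [sq_nonneg (1 - 2*p), mul_nonneg (mul_nonneg (pow_nonneg hμ0 4) hp0) hp1']
  have hu : ((Real.sqrt p : ℝ) : ℂ)^2 = (p : ℂ) := by
    have := Real.sq_sqrt hp0; exact_mod_cast congrArg (fun x : ℝ => (x:ℂ)) this
  have hv : ((Real.sqrt (1-p) : ℝ) : ℂ)^2 = 1 - (p : ℂ) := by
    have := Real.sq_sqrt hp1'; push_cast [this]; push_cast; ring_nf
    exact_mod_cast congrArg (fun x : ℝ => (x:ℂ)) this
  have hs : (((Real.sqrt p : ℝ) : ℂ) * ((Real.sqrt (1-p) : ℝ) : ℂ))^2 = (p:ℂ) * (1 - (p:ℂ)) := by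
    rw [mul_pow, hu, hv]
  have hr : ((Real.sqrt (1 + (16 * μ ^ 4 - 4) * p * (1 - p)) : ℝ) : ℂ)^2
      = 1 + (16*(μ:ℂ)^4-4)*(p:ℂ)*(1-(p:ℂ)) := by
    have := Real.sq_sqrt hD0
    have h2 := congrArg (fun x : ℝ => (x:ℂ)) this
    push_cast at h2 ⊢
    exact h2
  -- charpoly of A
  have hform : Matrix.reindex finProdFinEquiv finProdFinEquiv A =
      !![(1+8*(p:ℂ))/16, 0, 0, (μ:ℂ)^2*(((Real.sqrt p : ℝ) : ℂ) * ((Real.sqrt (1-p) : ℝ) : ℂ));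
        0, 3/16, 0, 0;
        0, 0, 3/16, 0;
        (μ:ℂ)^2*(((Real.sqrt p : ℝ) : ℂ) * ((Real.sqrt (1-p) : ℝ) : ℂ)), 0, 0,
          (9-8*(p:ℂ))/16] := by
    rw [hAdef, matrix_eq μ p]
    ext i j
    fin_cases i <;> fin_cases j <;> simp <;>
      first
        | linear_combination ((9:ℂ)/16)*hu + (1/16 : ℂ)*hv
        | linear_combination ((3:ℂ)/16)*hu + (3/16 : ℂ)*hv
        | linear_combination ((1:ℂ)/16)*hu + (9/16 : ℂ)*hv
        | linear_combination (9:ℂ)*hu + hv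
        | linear_combination (3:ℂ)*hu + (3:ℂ)*hv
        | linear_combination hu + (9:ℂ)*hv
        | ring
  have hcpA : A.charpoly =
      (X - C (3/16)) * ((X - C (3/16)) *
        ((X - C ((5+4*((Real.sqrt (1 + (16 * μ ^ 4 - 4) * p * (1 - p)) : ℝ) : ℂ))/16)) *
          ((X - C ((5-4*((Real.sqrt (1 + (16 * μ ^ 4 - 4) * p * (1 - p)) : ℝ) : ℂ))/16)) * 1))) := by
    rw [← Matrix.charpoly_reindex finProdFinEquiv, hform]
    exact charpoly_M4 _ _ _ _ hs hr
  have hprodS : ((Multiset.map (fun x : ℝ => (x:ℂ))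
        (Multiset.map hM.eigenvalues Finset.univ.val)).map (fun a => X - C a)).prod
      = A.charpoly := by
    rw [herm_charpoly A hM, Multiset.map_map, Multiset.map_map,
      Finset.prod_eq_multiset_prod]
    rfl
  have hprodT : ((Multiset.map (fun x : ℝ => (x:ℂ))
        ({3 / 16, 3 / 16,
          (5 + 4 * Real.sqrt (1 + (16 * μ ^ 4 - 4) * p * (1 - p))) / 16,
          (5 - 4 * Real.sqrt (1 + (16 * μ ^ 4 - 4) * p * (1 - p))) / 16} : Multiset ℝ)).map
        (fun a => X - C a)).prod = A.charpoly := by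
    rw [hcpA]
    simp only [Multiset.insert_eq_cons, Multiset.map_cons, Multiset.map_singleton,
      Multiset.prod_cons, Multiset.prod_singleton]
    push_cast
    ring
  have key : Multiset.map (fun x : ℝ => (x:ℂ)) (Multiset.map hM.eigenvalues Finset.univ.val)
      = Multiset.map (fun x : ℝ => (x:ℂ))
        ({3 / 16, 3 / 16,
          (5 + 4 * Real.sqrt (1 + (16 * μ ^ 4 - 4) * p * (1 - p))) / 16,
          (5 - 4 * Real.sqrt (1 + (16 * μ ^ 4 - 4) * p * (1 - p))) / 16} : Multiset ℝ) := by
    calc Multiset.map (fun x : ℝ => (x:ℂ)) (Multiset.map hM.eigenvalues Finset.univ.val)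
        = ((Multiset.map (fun x : ℝ => (x:ℂ))
            (Multiset.map hM.eigenvalues Finset.univ.val)).map (fun a => X - C a)).prod.roots :=
          (Polynomial.roots_multiset_prod_X_sub_C _).symm
      _ = ((Multiset.map (fun x : ℝ => (x:ℂ))
            ({3 / 16, 3 / 16,
              (5 + 4 * Real.sqrt (1 + (16 * μ ^ 4 - 4) * p * (1 - p))) / 16,
              (5 - 4 * Real.sqrt (1 + (16 * μ ^ 4 - 4) * p * (1 - p))) / 16} : Multiset ℝ)).map
            (fun a => X - C a)).prod.roots := by rw [hprodS, hprodT]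
      _ = _ := Polynomial.roots_multiset_prod_X_sub_C _
  exact Multiset.map_injective Complex.ofReal_injective key
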